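/- Let k ⊆ κ be finite fields, let B be a finite étale κ-algebra (a finite product of finite field extensions of κ) that admits a κ-algebra homomorphism B → κ, and let I be a nonzero ideal of the polynomial ring κ[t]. Then there exists a natural number N such that for all distinct prime numbers q₁, q₂ ≥ N and all field extensions k₁, k₂ of k with [k₁ : k] = q₁ and [k₂ : k] = q₂, there exists a surjective κ-algebra homomorphism φ : κ[t] → (B ⊗_k k₁) × (B ⊗_k k₂) whose kernel is comaximal with I, i.e. ker φ + I = κ[t]. -/

import Mathlib

open Polynomial

/-- Arithmetic: eventually `e * (Q ^ (e / 2) + c) + c < Q ^ e`. -/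
lemma stmt8_arith (Q c : ℕ) (hQ : 2 ≤ Q) :
    ∃ N : ℕ, 0 < N ∧ ∀ e : ℕ, N ≤ e → e * (Q ^ (e / 2) + c) + c < Q ^ e := by
  refine ⟨2 * (2 * c + 5) + 2, by positivity, fun e he => ?_⟩
  set m := e / 2 with hm
  have hm0 : 2 * c + 5 ≤ m := by omega
  have he2 : 2 * m ≤ e := by omega
  have he3 : e ≤ 2 * m + 1 := by omega
  -- 2 ^ m ≥ 4 * (c + 2) * (m - (c + 2))  via  2^(c+3) ≥ 4(c+2), 2^(m-c-3) ≥ m-c-2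
  have h1 : 2 ^ (c + 3) ≥ 4 * (c + 2) := by
    have := Nat.lt_two_pow_self (n := c)
    calc 2 ^ (c + 3) = 8 * 2 ^ c := by ring
    _ ≥ 8 * (c + 1) := by nlinarith
    _ ≥ 4 * (c + 2) := by omega
  have h2 : 2 ^ (m - (c + 3)) ≥ m - c - 2 := by
    have := Nat.lt_two_pow_self (n := m - (c + 3))
    omega
  have h3 : 2 ^ m ≥ 4 * (c + 2) * (m - c - 2) := by
    have : 2 ^ m = 2 ^ (c + 3) * 2 ^ (m - (c + 3)) := by
      rw [← pow_add]; congr 1; omega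
    rw [this]
    calc 2 ^ (c + 3) * 2 ^ (m - (c + 3)) ≥ (4 * (c + 2)) * (m - c - 2) :=
      Nat.mul_le_mul h1 h2
    _ = 4 * (c + 2) * (m - c - 2) := by ring
  have h4 : 2 ^ m ≥ (2 * m + 2) * (c + 2) := by
    have : 4 * (c + 2) * (m - c - 2) ≥ (2 * m + 2) * (c + 2) := by
      have h5 : 2 * (m - c - 2) ≥ m + 1 := by omega
      calc 4 * (c + 2) * (m - c - 2) = (c + 2) * (2 * (2 * (m - c - 2))) := by ring
      _ ≥ (c + 2) * (2 * (m + 1)) := by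
        have := Nat.mul_le_mul_left (c + 2) (Nat.mul_le_mul_left 2 h5)
        nlinarith
      _ = (2 * m + 2) * (c + 2) := by ring
    omega
  have hT : Q ^ m ≥ (2 * m + 2) * (c + 2) := le_trans h4 (Nat.pow_le_pow_left hQ m)
  have hT1 : 1 ≤ Q ^ m := Nat.one_le_pow _ _ (by omega)
  have hQe : Q ^ m * Q ^ m ≤ Q ^ e := by
    rw [← pow_add]; exact Nat.pow_le_pow_right (by omega) (by omega)
  have key : (2 * m + 1) * (Q ^ m + c) + c < Q ^ m * Q ^ m := by
    set T := Q ^ m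
    have : T * T ≥ ((2 * m + 2) * (c + 2)) * T := Nat.mul_le_mul_right T hT
    nlinarith
  calc e * (Q ^ m + c) + c ≤ (2 * m + 1) * (Q ^ m + c) + c := by
        have := Nat.mul_le_mul_right (Q ^ m + c) he3; omega
  _ < Q ^ m * Q ^ m := key
  _ ≤ Q ^ e := hQe

/-- In a finite extension `F` of a finite field `κ` satisfying a counting bound, there is a
primitive element whose minimal polynomial avoids a given finite set and does not divide `g`. -/
lemma stmt8_count (κ F : Type*) [Field κ] [Fintype κ] [Field F] [Algebra κ F]
    [FiniteDimensional κ F] (S : Finset κ[X]) (g : κ[X]) (hg : g ≠ 0)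
    (hbig : Module.finrank κ F * (Fintype.card κ ^ (Module.finrank κ F / 2) + S.card)
        + g.natDegree < Fintype.card κ ^ Module.finrank κ F) :
    ∃ α : F, Algebra.adjoin κ {α} = ⊤ ∧ minpoly κ α ∉ S ∧ ¬ (minpoly κ α ∣ g) := by
  classical
  set Q := Fintype.card κ with hQdef
  have hQ2 : 2 ≤ Q := Fintype.one_lt_card
  set e := Module.finrank κ F with he
  have he0 : 0 < e := Module.finrank_pos
  haveI : Fintype F := Module.fintypeOfFintype (Module.finBasis κ F)
  have hcardF : Fintype.card F = Q ^ e := Module.card_eq_pow_finrank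
  -- bad sets
  set bad1 : Finset F :=
    (Nat.properDivisors e).biUnion
      (fun j => (((X : F[X]) ^ (Q ^ j) - X).roots).toFinset) with hbad1
  set bad2 : Finset F :=
    (S.filter (fun p => p.natDegree ≤ e)).biUnion
      (fun p => ((p.map (algebraMap κ F)).roots).toFinset) with hbad2
  set bad3 : Finset F := ((g.map (algebraMap κ F)).roots).toFinset with hbad3
  have hb1 : bad1.card ≤ e * Q ^ (e / 2) := by
    calc bad1.card ≤ ∑ j ∈ Nat.properDivisors e, (((X : F[X]) ^ (Q ^ j) - X).roots).toFinset.card :=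
          Finset.card_biUnion_le
    _ ≤ ∑ _j ∈ Nat.properDivisors e, Q ^ (e / 2) := by
        refine Finset.sum_le_sum fun j hj => ?_
        obtain ⟨hjd, hjlt⟩ := Nat.mem_properDivisors.mp hj
        have hj2 : j ≤ e / 2 := by
          obtain ⟨c, hc⟩ := hjd
          have hc2 : 2 ≤ c := by
            rcases c with _ | _ | c
            · omega
            · omega
            · omega
          refine Nat.le_div_iff_mul_le (by norm_num) |>.mpr ?_
          nlinarith [hc]
        calc (((X : F[X]) ^ (Q ^ j) - X).roots).toFinset.card
            ≤ Multiset.card (((X : F[X]) ^ (Q ^ j) - X).roots) := Multiset.toFinset_card_le _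
        _ ≤ ((X : F[X]) ^ (Q ^ j) - X).natDegree := card_roots' _
        _ ≤ max (natDegree ((X : F[X]) ^ (Q ^ j))) (natDegree (X : F[X])) := natDegree_sub_le _ _
        _ ≤ Q ^ j := by
            simp only [natDegree_X_pow, natDegree_X]
            have : 1 ≤ Q ^ j := Nat.one_le_pow _ _ (by omega)
            omega
        _ ≤ Q ^ (e / 2) := Nat.pow_le_pow_right (by omega) hj2
    _ ≤ e * Q ^ (e / 2) := by
        have : (Nat.properDivisors e).card ≤ e := by
          refine le_trans (Finset.card_le_card fun j hj => ?_) (by simp : (Finset.range e).card ≤ e)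
          exact Finset.mem_range.mpr (Nat.mem_properDivisors.mp hj).2
        calc ∑ _j ∈ Nat.properDivisors e, Q ^ (e / 2) = (Nat.properDivisors e).card * Q ^ (e / 2) := by
              simp [Finset.sum_const, smul_eq_mul]
        _ ≤ e * Q ^ (e / 2) := Nat.mul_le_mul_right _ this
  have hb2 : bad2.card ≤ e * S.card := by
    calc bad2.card ≤ ∑ p ∈ S.filter (fun p => p.natDegree ≤ e),
          ((p.map (algebraMap κ F)).roots).toFinset.card := Finset.card_biUnion_le
    _ ≤ ∑ _p ∈ S.filter (fun p => p.natDegree ≤ e), e := by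
        refine Finset.sum_le_sum fun p hp => ?_
        obtain ⟨hpS, hpe⟩ := Finset.mem_filter.mp hp
        calc ((p.map (algebraMap κ F)).roots).toFinset.card
            ≤ Multiset.card ((p.map (algebraMap κ F)).roots) := Multiset.toFinset_card_le _
        _ ≤ (p.map (algebraMap κ F)).natDegree := card_roots' _
        _ ≤ p.natDegree := natDegree_map_le
        _ ≤ e := hpe
    _ ≤ e * S.card := by
        rw [Finset.sum_const, smul_eq_mul]
        exact le_trans (Nat.mul_le_mul_right e (Finset.card_filter_le _ _)) (by ring_nf; omega)
  have hb3 : bad3.card ≤ g.natDegree := by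
    calc bad3.card ≤ Multiset.card ((g.map (algebraMap κ F)).roots) := Multiset.toFinset_card_le _
    _ ≤ (g.map (algebraMap κ F)).natDegree := card_roots' _
    _ ≤ g.natDegree := natDegree_map_le
  have hlt : (bad1 ∪ bad2 ∪ bad3).card < Fintype.card F := by
    calc (bad1 ∪ bad2 ∪ bad3).card ≤ bad1.card + bad2.card + bad3.card :=
      le_trans (Finset.card_union_le _ _) (by
        have := Finset.card_union_le bad1 bad2; omega)
    _ ≤ e * Q ^ (e / 2) + e * S.card + g.natDegree := by omega
    _ = e * (Q ^ (e / 2) + S.card) + g.natDegree := by ring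
    _ < Q ^ e := hbig
    _ = Fintype.card F := hcardF.symm
  obtain ⟨α, hα⟩ : ∃ α : F, α ∉ bad1 ∪ bad2 ∪ bad3 := by
    by_contra h
    push_neg at h
    have : (Finset.univ : Finset F) ⊆ bad1 ∪ bad2 ∪ bad3 := fun x _ => h x
    have := Finset.card_le_card this
    simp only [Finset.card_univ] at this
    omega
  have hα1 : α ∉ bad1 := fun h => hα (by simp [Finset.mem_union, h])
  have hα2 : α ∉ bad2 := fun h => hα (by simp [Finset.mem_union, h])
  have hα3 : α ∉ bad3 := fun h => hα (by simp [Finset.mem_union, h])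
  have hint : IsIntegral κ α := IsIntegral.of_finite κ α
  -- (a) generator
  have hgen : Algebra.adjoin κ {α} = ⊤ := by
    by_contra hne
    have htop : IntermediateField.adjoin κ {α} ≠ ⊤ := by
      intro h
      apply hne
      rw [← IntermediateField.adjoin_simple_toSubalgebra_of_isAlgebraic hint.isAlgebraic, h]
      rfl
    set E := IntermediateField.adjoin κ {α} with hE
    set j := Module.finrank κ E with hj
    have hjd : j ∣ e := ⟨Module.finrank E F, (Module.finrank_mul_finrank κ E F).symm⟩
    have hjne : j ≠ e := by
      intro h
      apply htop
      have : Module.finrank κ E.toSubalgebra.toSubmodule = Module.finrank κ F := h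
      have := Submodule.eq_top_of_finrank_eq this
      exact IntermediateField.toSubalgebra_injective (by
        apply Subalgebra.toSubmodule_injective
        simpa using this)
    have hjp : j ∈ Nat.properDivisors e :=
      Nat.mem_properDivisors.mpr ⟨hjd, lt_of_le_of_ne (Nat.le_of_dvd he0 hjd) hjne⟩
    haveI : Fintype E := Module.fintypeOfFintype (Module.finBasis κ E)
    have hcardE : Fintype.card E = Q ^ j := Module.card_eq_pow_finrank
    have hmem : α ∈ E := IntermediateField.mem_adjoin_simple_self κ α
    have hroot : α ^ Q ^ j = α := by
      have := FiniteField.pow_card (⟨α, hmem⟩ : E)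
      rw [hcardE] at this
      have := congrArg (Subtype.val) this
      simpa using this
    have hne0 : ((X : F[X]) ^ (Q ^ j) - X) ≠ 0 := by
      have h2 : 2 ≤ Q ^ j := by
        have h0 : 0 < j := Nat.pos_of_mem_properDivisors hjp
        calc 2 ≤ Q := hQ2
        _ = Q ^ 1 := (pow_one Q).symm
        _ ≤ Q ^ j := Nat.pow_le_pow_right (by omega) h0
      intro h0
      have := congrArg (fun p => Polynomial.coeff p (Q ^ j)) h0
      simp only [coeff_sub, coeff_X_pow, if_pos rfl, coeff_zero, Polynomial.coeff_X,
        sub_eq_zero] at this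
      rw [if_neg (show ¬ (1 = Q ^ j) by omega)] at this
      exact one_ne_zero this
    apply hα1
    rw [hbad1]
    refine Finset.mem_biUnion.mpr ⟨j, hjp, ?_⟩
    rw [Multiset.mem_toFinset, mem_roots hne0]
    simp [IsRoot, hroot]
  -- (b) avoid S
  have hSav : minpoly κ α ∉ S := by
    intro hmem
    apply hα2
    rw [hbad2]
    refine Finset.mem_biUnion.mpr ⟨minpoly κ α, ?_, ?_⟩
    · exact Finset.mem_filter.mpr ⟨hmem, minpoly.natDegree_le α⟩
    · rw [Multiset.mem_toFinset, mem_roots ((Polynomial.map_ne_zero_iff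
        (algebraMap κ F).injective).mpr (minpoly.ne_zero hint))]
      rw [IsRoot, eval_map, ← aeval_def, minpoly.aeval]
  -- (c) avoid divisors of g
  have hgav : ¬ (minpoly κ α ∣ g) := by
    intro hdvd
    apply hα3
    rw [hbad3]
    rw [Multiset.mem_toFinset, mem_roots ((Polynomial.map_ne_zero_iff (algebraMap κ F).injective).mpr hg)]
    obtain ⟨h, rfl⟩ := hdvd
    rw [IsRoot, Polynomial.map_mul, eval_mul, eval_map, ← aeval_def, minpoly.aeval, zero_mul]
  exact ⟨α, hgen, hSav, hgav⟩

/-- CRT construction: a surjection from `κ[X]` onto a finite product of finite field extensions,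
with kernel comaximal to `span {g}`. -/
lemma stmt8_pi (κ : Type*) [Field κ] [Fintype κ] (ι : Type*) [Fintype ι]
    (K : ι → Type*) [∀ i, Field (K i)] [∀ i, Algebra κ (K i)]
    [∀ i, FiniteDimensional κ (K i)] (g : κ[X]) (hg : g ≠ 0)
    (hbig : ∀ i, Module.finrank κ (K i) *
        (Fintype.card κ ^ (Module.finrank κ (K i) / 2) + Fintype.card ι) + g.natDegree
        < Fintype.card κ ^ Module.finrank κ (K i)) :
    ∃ φ : κ[X] →ₐ[κ] (∀ i, K i), Function.Surjective φ ∧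
      RingHom.ker φ ⊔ Ideal.span {g} = ⊤ := by
  classical
  -- greedy selection of generators with distinct minimal polynomials avoiding divisors of g
  have sel : ∀ s : Finset ι, ∃ α : ∀ i, K i,
      (∀ i ∈ s, Algebra.adjoin κ {α i} = ⊤ ∧ ¬ (minpoly κ (α i) ∣ g)) ∧
      (∀ i ∈ s, ∀ j ∈ s, minpoly κ (α i) = minpoly κ (α j) → i = j) := by
    intro s
    induction s using Finset.cons_induction with
    | empty => exact ⟨fun i => 0, by simp, by simp⟩
    | cons a s ha ih =>
      obtain ⟨α, h1, h2⟩ := ih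
      set S : Finset κ[X] := s.image (fun i => minpoly κ (α i)) with hS
      have hcard : S.card ≤ Fintype.card ι :=
        le_trans (Finset.card_image_le) (Finset.card_le_univ s)
      obtain ⟨β, hβ1, hβ2, hβ3⟩ := stmt8_count κ (K a) S g hg (by
        refine lt_of_le_of_lt ?_ (hbig a)
        have := Nat.add_le_add_left hcard (Fintype.card κ ^ (Module.finrank κ (K a) / 2))
        have := Nat.mul_le_mul_left (Module.finrank κ (K a)) this
        omega)
      refine ⟨Function.update α a β, ?_, ?_⟩
      · intro i hi
        rcases Finset.mem_cons.mp hi with rfl | hi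
        · rw [Function.update_self]; exact ⟨hβ1, hβ3⟩
        · have hne : i ≠ a := fun h => ha (by rwa [h] at hi)
          rw [Function.update_of_ne hne]
          exact h1 i hi
      · intro i hi j hj hij
        by_cases hia : i = a <;> by_cases hja : j = a
        · rw [hia, hja]
        · exfalso
          subst hia
          rw [Function.update_self, Function.update_of_ne hja] at hij
          have hjs := (Finset.mem_cons.mp hj).resolve_left hja
          exact hβ2 (hS ▸ Finset.mem_image.mpr ⟨j, hjs, hij.symm⟩)
        · exfalso
          subst hja
          rw [Function.update_of_ne hia, Function.update_self] at hij
          have his := (Finset.mem_cons.mp hi).resolve_left hia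
          exact hβ2 (hS ▸ Finset.mem_image.mpr ⟨i, his, hij⟩)
        · rw [Function.update_of_ne hia, Function.update_of_ne hja] at hij
          exact h2 i ((Finset.mem_cons.mp hi).resolve_left hia) j
            ((Finset.mem_cons.mp hj).resolve_left hja) hij
  obtain ⟨α, hgen, hinj⟩ := sel Finset.univ
  have hgen' : ∀ i, Algebra.adjoin κ {α i} = ⊤ := fun i => (hgen i (Finset.mem_univ i)).1
  have hnd : ∀ i, ¬ (minpoly κ (α i) ∣ g) := fun i => (hgen i (Finset.mem_univ i)).2
  have hintegral : ∀ i, IsIntegral κ (α i) := fun i => IsIntegral.of_finite κ (α i)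
  set p : ι → κ[X] := fun i => minpoly κ (α i) with hp
  have hirr : ∀ i, Irreducible (p i) := fun i => minpoly.irreducible (hintegral i)
  have hmono : ∀ i, (p i).Monic := fun i => minpoly.monic (hintegral i)
  have hdist : ∀ i j, i ≠ j → p i ≠ p j := fun i j hne h =>
    hne (hinj i (Finset.mem_univ i) j (Finset.mem_univ j) h)
  have hcop : ∀ i j, i ≠ j → IsCoprime (p i) (p j) := by
    intro i j hne
    rw [(hirr i).coprime_iff_not_dvd]
    intro hdvd
    exact hdist i j hne (eq_of_monic_of_associated (hmono i) (hmono j)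
      ((hirr i).associated_of_dvd (hirr j) hdvd))
  set φ : κ[X] →ₐ[κ] ∀ i, K i := Pi.algHom κ K (fun i => aeval (α i)) with hφ
  have hker : ∀ i, RingHom.ker (aeval (α i) : κ[X] →ₐ[κ] K i) = Ideal.span {p i} := by
    intro i
    rw [hp]
    rw [minpoly.ker_aeval_eq_span_minpoly]
  have hsurj : Function.Surjective φ := by
    intro y
    -- each coordinate is hit
    have hcomp : ∀ i, ∃ f : κ[X], aeval (α i) f = y i := by
      intro i
      have : (aeval (α i) : κ[X] →ₐ[κ] K i).range = ⊤ := by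
        rw [← Algebra.adjoin_singleton_eq_range_aeval, hgen' i]
      have hy : y i ∈ (aeval (α i) : κ[X] →ₐ[κ] K i).range := by
        rw [this]; exact Algebra.mem_top
      obtain ⟨f, hf⟩ := (AlgHom.mem_range _).mp hy
      exact ⟨f, hf⟩
    choose f hf using hcomp
    set J : ι → Ideal κ[X] := fun i => RingHom.ker (aeval (α i) : κ[X] →ₐ[κ] K i) with hJ
    have hJcop : Pairwise (Function.onFun IsCoprime J) := by
      intro i j hne
      simp only [Function.onFun, hJ, hker]
      exact (Ideal.isCoprime_span_singleton_iff _ _).mpr (hcop i j hne)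
    obtain ⟨z, hz⟩ := Ideal.quotientInfToPiQuotient_surj hJcop
      (fun i => Ideal.Quotient.mk (J i) (f i))
    obtain ⟨x, rfl⟩ := Ideal.Quotient.mk_surjective z
    refine ⟨x, ?_⟩
    funext i
    have hzi := congrFun hz i
    rw [Ideal.quotientInfToPiQuotient_mk] at hzi
    have : x - f i ∈ J i := by
      rwa [Ideal.Quotient.eq] at hzi
    have : aeval (α i) (x - f i) = 0 := this
    have : aeval (α i) x = aeval (α i) (f i) := by
      rw [map_sub, sub_eq_zero] at this; exact this
    simpa [hφ, hf i] using this
  refine ⟨φ, hsurj, ?_⟩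
  -- comaximality
  have hPker : Ideal.span {∏ i, p i} ≤ RingHom.ker φ := by
    rw [Ideal.span_le, Set.singleton_subset_iff]
    have : φ (∏ i, p i) = 0 := by
      funext i
      have : p i ∣ ∏ j, p j := Finset.dvd_prod_of_mem p (Finset.mem_univ i)
      obtain ⟨c, hc⟩ := this
      have : aeval (α i) (∏ j, p j) = 0 := by
        rw [hc, map_mul]
        have : aeval (α i) (p i) = 0 := minpoly.aeval κ (α i)
        rw [this, zero_mul]
      simpa [hφ] using this
    exact this
  have hcopg : IsCoprime (∏ i, p i) g := by
    refine IsCoprime.prod_left fun i _ => ?_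
    rw [(hirr i).coprime_iff_not_dvd]
    exact hnd i
  have : Ideal.span {∏ i, p i} ⊔ Ideal.span {g} = ⊤ := by
    rw [← Ideal.isCoprime_iff_sup_eq]
    exact (Ideal.isCoprime_span_singleton_iff _ _).mpr hcopg
  exact eq_top_iff.mpr (this ▸ sup_le_sup_right hPker _)

lemma stmt8_isReduced_AR {F : Type*} [Field F] {q : F[X]} (hq : Squarefree q) :
    IsReduced (AdjoinRoot q) := by
  constructor
  intro x hx
  obtain ⟨f, rfl⟩ := AdjoinRoot.mk_surjective x
  obtain ⟨n, hn⟩ := hx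
  rw [← map_pow] at hn
  exact AdjoinRoot.mk_eq_zero.mpr (hq.isRadical n f (AdjoinRoot.mk_eq_zero.mp hn))

lemma stmt8_isReduced_tensor (k F L : Type*) [Field k] [Field F] [Field L] [Algebra k F]
    [Algebra k L] [FiniteDimensional k L] [Algebra.IsSeparable k L] :
    IsReduced (TensorProduct k F L) := by
  classical
  obtain ⟨α, hα⟩ := Field.exists_primitive_element k L
  have hint : IsIntegral k α := IsIntegral.of_finite k α
  set p := minpoly k α with hpdef
  set q := p.map (algebraMap k F) with hqdef
  have hp0 : p ≠ 0 := minpoly.ne_zero hint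
  have hq0 : q ≠ 0 := (Polynomial.map_ne_zero_iff (algebraMap k F).injective).mpr hp0
  have hsep : p.Separable := Algebra.IsSeparable.isSeparable k α
  have hqsf : Squarefree q := (hsep.map (f := algebraMap k F)).squarefree
  haveI hred : IsReduced (AdjoinRoot q) := stmt8_isReduced_AR hqsf
  have ε : AdjoinRoot p ≃ₐ[k] L :=
    (IntermediateField.adjoinRootEquivAdjoin k hint).trans
      ((IntermediateField.equivOfEq hα).trans IntermediateField.topEquiv)
  have hroot : (Polynomial.aeval (AdjoinRoot.root q)) p = 0 := by
    rw [← Polynomial.aeval_map_algebraMap F, ← hqdef, AdjoinRoot.aeval_eq, AdjoinRoot.mk_self]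
  set Θ : TensorProduct k F (AdjoinRoot p) →ₐ[F] AdjoinRoot q :=
    Algebra.TensorProduct.lift (Algebra.ofId F _)
      (AdjoinRoot.liftAlgHom p (Algebra.ofId k _) (AdjoinRoot.root q) hroot) (fun _ _ => Commute.all _ _) with hΘ
  have hΘsurj : Function.Surjective Θ := by
    have h1 : AdjoinRoot.root q ∈ Θ.range :=
      ⟨(1 : F) ⊗ₜ AdjoinRoot.root p, by
        simp [hΘ, Algebra.TensorProduct.lift_tmul, AdjoinRoot.liftAlgHom_root]
        exact AdjoinRoot.liftAlgHom_root _ _ _ _⟩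
    have h3 : Algebra.adjoin F {AdjoinRoot.root q} = ⊤ := by
      have := (AdjoinRoot.powerBasis hq0).adjoin_gen_eq_top
      rwa [AdjoinRoot.powerBasis_gen] at this
    have h2 : (⊤ : Subalgebra F (AdjoinRoot q)) ≤ Θ.range := by
      rw [← h3]
      exact Algebra.adjoin_le (by simpa using h1)
    intro y
    obtain ⟨x, hx⟩ := h2 (Algebra.mem_top : y ∈ ⊤)
    exact ⟨x, hx⟩
  haveI : FiniteDimensional k (AdjoinRoot p) := (AdjoinRoot.powerBasis hp0).finite
  haveI : FiniteDimensional F (AdjoinRoot q) := (AdjoinRoot.powerBasis hq0).finite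
  have hfr : Module.finrank F (TensorProduct k F (AdjoinRoot p))
      = Module.finrank F (AdjoinRoot q) := by
    rw [Module.finrank_baseChange, (AdjoinRoot.powerBasis hp0).finrank,
      (AdjoinRoot.powerBasis hq0).finrank, AdjoinRoot.powerBasis_dim, AdjoinRoot.powerBasis_dim]
    exact (natDegree_map_eq_of_injective (algebraMap k F).injective p).symm
  have hΘinj : Function.Injective Θ :=
    (LinearMap.injective_iff_surjective_of_finrank_eq_finrank hfr (f := Θ.toLinearMap)).mpr hΘsurj
  have Ξ : TensorProduct k F L ≃ₐ[F] TensorProduct k F (AdjoinRoot p) :=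
    Algebra.TensorProduct.congr AlgEquiv.refl ε.symm
  exact isReduced_of_injective (Θ.toRingHom.comp Ξ.toRingEquiv.toRingHom)
    (hΘinj.comp Ξ.injective)

/-- Artinian reduced `κ`-algebra is a product of its quotients by maximal ideals. -/
noncomputable def stmt8_piEquiv (κ A : Type*) [CommSemiring κ] [CommRing A] [Algebra κ A]
    [IsArtinianRing A] [IsReduced A] :
    A ≃ₐ[κ] ∀ I : {I : Ideal A | I.IsMaximal}, A ⧸ I.1 := by
  haveI : Finite {I : Ideal A | I.IsMaximal} := (IsArtinianRing.setOfPred_isMaximal_finite A).to_subtype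
  refine AlgEquiv.ofBijective
    (Pi.algHom κ _ (fun I => Ideal.Quotient.mkₐ κ I.1)) ⟨?_, ?_⟩
  · intro x y hxy
    rw [← sub_eq_zero]
    have hmem : ∀ I : {I : Ideal A | I.IsMaximal}, x - y ∈ I.1 := by
      intro I
      have : Ideal.Quotient.mk I.1 x = Ideal.Quotient.mk I.1 y := congrFun hxy I
      rwa [Ideal.Quotient.eq] at this
    have hnil : x - y ∈ nilradical A := by
      rw [nilradical_eq_sInf]
      refine Ideal.mem_sInf.mpr fun {J} hJ => ?_
      have : J.IsMaximal := (IsArtinianRing.isPrime_iff_isMaximal J).mp hJ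
      exact hmem ⟨J, this⟩
    rw [nilradical_eq_zero] at hnil
    simpa using hnil
  · intro y
    have hcop : Pairwise (Function.onFun IsCoprime (fun I : {I : Ideal A | I.IsMaximal} => I.1)) := by
      intro I J hne
      exact Ideal.isCoprime_iff_sup_eq.mpr <| I.2.coprime_of_ne J.2 <| by
        rwa [Ne, Subtype.coe_inj]
    obtain ⟨z, hz⟩ := Ideal.quotientInfToPiQuotient_surj hcop y
    obtain ⟨x, rfl⟩ := Ideal.Quotient.mk_surjective z
    refine ⟨x, ?_⟩
    funext I
    have := congrFun hz I
    rwa [Ideal.quotientInfToPiQuotient_mk] at this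

/-- The tensor product of a reduced artinian algebra with a finite separable field extension
is reduced. -/
lemma stmt8_isReduced_tensor' (k B L : Type*) [Field k] [CommRing B] [Algebra k B]
    [IsArtinianRing B] [IsReduced B] [Field L] [Algebra k L] [FiniteDimensional k L]
    [Algebra.IsSeparable k L] : IsReduced (TensorProduct k B L) := by
  classical
  haveI : Finite {I : Ideal B | I.IsMaximal} := (IsArtinianRing.setOfPred_isMaximal_finite B).to_subtype
  haveI : Fintype {I : Ideal B | I.IsMaximal} := Fintype.ofFinite _
  set ι := {I : Ideal B | I.IsMaximal} with hι
  have Ψ : B ≃ₐ[k] ∀ I : ι, B ⧸ I.1 := stmt8_piEquiv k B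
  have χ₁ : TensorProduct k B L ≃ₐ[k] TensorProduct k L B := Algebra.TensorProduct.comm k B L
  have χ₂ : TensorProduct k L B ≃ₐ[k] TensorProduct k L (∀ I : ι, B ⧸ I.1) :=
    Algebra.TensorProduct.congr AlgEquiv.refl Ψ
  have χ₃ : TensorProduct k L (∀ I : ι, B ⧸ I.1) ≃ₐ[k] ∀ I : ι, TensorProduct k L (B ⧸ I.1) :=
    Algebra.TensorProduct.piRight k k L _
  haveI : ∀ I : ι, IsReduced (TensorProduct k L (B ⧸ I.1)) := by
    intro I
    haveI hmax : I.1.IsMaximal := I.2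
    letI : Field (B ⧸ I.1) := Ideal.Quotient.field I.1
    haveI : IsReduced (TensorProduct k (B ⧸ I.1) L) := stmt8_isReduced_tensor k (B ⧸ I.1) L
    exact isReduced_of_injective
      (Algebra.TensorProduct.comm k L (B ⧸ I.1)).toRingEquiv.toRingHom
      (Algebra.TensorProduct.comm k L (B ⧸ I.1)).injective
  exact isReduced_of_injective ((χ₁.trans (χ₂.trans χ₃)).toRingEquiv : TensorProduct k B L ≃+* _).toRingHom
    (χ₁.trans (χ₂.trans χ₃)).injective

set_option maxHeartbeats 1000000 in
lemma stmt8_component (k κ : Type) [Field k] [Field κ] [Fintype k] [Fintype κ] [Algebra k κ]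
    (B : Type) [CommRing B] [Algebra κ B] [Algebra k B] [IsScalarTower k κ B] [Nontrivial B]
    [FiniteDimensional κ B] [IsReduced B]
    (q : ℕ) (hq : q.Prime) (hdq : Module.finrank k κ < q)
    (k₁ : Type) [Field k₁] [Algebra k k₁] (h1 : Module.finrank k k₁ = q) :
    Nonempty ((TensorProduct k B k₁) ≃ₐ[κ]
        ∀ I : {I : Ideal (TensorProduct k B k₁) | I.IsMaximal}, TensorProduct k B k₁ ⧸ I.1) ∧
      (∀ I : {I : Ideal (TensorProduct k B k₁) | I.IsMaximal},
        q ∣ Module.finrank κ (TensorProduct k B k₁ ⧸ I.1) ∧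
        0 < Module.finrank κ (TensorProduct k B k₁ ⧸ I.1) ∧
        FiniteDimensional κ (TensorProduct k B k₁ ⧸ I.1)) ∧
      (Nat.card {I : Ideal (TensorProduct k B k₁) | I.IsMaximal} ≤ Module.finrank κ B ∧
       Finite {I : Ideal (TensorProduct k B k₁) | I.IsMaximal}) := by
  classical
  haveI : FiniteDimensional k k₁ := FiniteDimensional.of_finrank_pos (by omega)
  haveI : FiniteDimensional k κ := Module.Finite.of_finite
  haveI : FiniteDimensional k B := Module.Finite.trans κ B
  set A := TensorProduct k B k₁ with hA
  haveI : Module.Finite k A := inferInstance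
  haveI : FiniteDimensional κ A := Module.Finite.of_restrictScalars_finite k κ A
  haveI : IsArtinianRing A := isArtinian_of_tower κ inferInstance
  haveI : IsArtinianRing B := isArtinian_of_tower κ inferInstance
  haveI : IsReduced A := stmt8_isReduced_tensor' k B k₁
  haveI : Finite {I : Ideal A | I.IsMaximal} := (IsArtinianRing.setOfPred_isMaximal_finite A).to_subtype
  haveI : Fintype {I : Ideal A | I.IsMaximal} := Fintype.ofFinite _
  set ι := {I : Ideal A | I.IsMaximal} with hι
  have e0 : A ≃ₐ[κ] ∀ I : ι, A ⧸ I.1 := stmt8_piEquiv κ A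
  have hdiv : ∀ I : ι, q ∣ Module.finrank κ (A ⧸ I.1) ∧ 0 < Module.finrank κ (A ⧸ I.1) ∧
      FiniteDimensional κ (A ⧸ I.1) := by
    intro I
    haveI hmax : I.1.IsMaximal := I.2
    letI : Field (A ⧸ I.1) := Ideal.Quotient.field I.1
    have ρ : k₁ →ₐ[k] A ⧸ I.1 :=
      (Ideal.Quotient.mkₐ k I.1).comp (Algebra.TensorProduct.includeRight)
    letI : Algebra k₁ (A ⧸ I.1) := ρ.toRingHom.toAlgebra
    haveI : IsScalarTower k k₁ (A ⧸ I.1) :=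
      IsScalarTower.of_algebraMap_eq (fun x => (ρ.commutes x).symm)
    haveI : Module.Finite k (A ⧸ I.1) := Module.Finite.trans κ (A ⧸ I.1)
    haveI : FiniteDimensional k₁ (A ⧸ I.1) := Module.Finite.of_restrictScalars_finite k k₁ _
    have t1 : Module.finrank k k₁ * Module.finrank k₁ (A ⧸ I.1) = Module.finrank k (A ⧸ I.1) :=
      Module.finrank_mul_finrank k k₁ (A ⧸ I.1)
    have t2 : Module.finrank k κ * Module.finrank κ (A ⧸ I.1) = Module.finrank k (A ⧸ I.1) :=
      Module.finrank_mul_finrank k κ (A ⧸ I.1)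
    have hqk : q ∣ Module.finrank k (A ⧸ I.1) := ⟨Module.finrank k₁ (A ⧸ I.1), by rw [← t1, h1]⟩
    have hd0 : 0 < Module.finrank k κ := Module.finrank_pos
    have hcop : Nat.Coprime q (Module.finrank k κ) :=
      (Nat.Prime.coprime_iff_not_dvd hq).mpr fun h => absurd (Nat.le_of_dvd hd0 h) (not_le.mpr hdq)
    have hdvd : q ∣ Module.finrank κ (A ⧸ I.1) := by
      refine hcop.dvd_of_dvd_mul_left ?_
      rw [t2]
      exact hqk
    exact ⟨hdvd, Module.finrank_pos, inferInstance⟩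
  refine ⟨⟨e0⟩, hdiv, ?_⟩
  -- cardinality bound
  haveI : ∀ I : ι, Module.Free κ (A ⧸ I.1) := fun I => Module.Free.of_divisionRing κ _
  have s1 : Module.finrank κ (∀ I : ι, A ⧸ I.1) = ∑ I : ι, Module.finrank κ (A ⧸ I.1) :=
    Module.finrank_pi_fintype κ
  have s2 : Module.finrank κ A = Module.finrank κ (∀ I : ι, A ⧸ I.1) :=
    e0.toLinearEquiv.finrank_eq
  have e1 : Module.finrank k A = Module.finrank k B * Module.finrank k k₁ :=
    Module.finrank_tensorProduct
  have e2 : Module.finrank k κ * Module.finrank κ A = Module.finrank k A :=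
    Module.finrank_mul_finrank k κ A
  have e3 : Module.finrank k κ * Module.finrank κ B = Module.finrank k B :=
    Module.finrank_mul_finrank k κ B
  have hd0 : 0 < Module.finrank k κ := Module.finrank_pos
  have hAq : Module.finrank κ A = Module.finrank κ B * q := by
    apply Nat.eq_of_mul_eq_mul_left hd0
    rw [e2, e1, ← h1]
    rw [← Nat.mul_assoc, e3]
  have hsum : ∑ I : ι, Module.finrank κ (A ⧸ I.1) = Module.finrank κ B * q := by
    rw [← s1, ← s2, hAq]
  have hlb : Fintype.card ι * q ≤ ∑ I : ι, Module.finrank κ (A ⧸ I.1) := by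
    calc Fintype.card ι * q = ∑ _I : ι, q := by
          rw [Finset.sum_const, Finset.card_univ, smul_eq_mul]
    _ ≤ ∑ I : ι, Module.finrank κ (A ⧸ I.1) :=
        Finset.sum_le_sum (fun I _ => Nat.le_of_dvd (hdiv I).2.1 (hdiv I).1)
  rw [Nat.card_eq_fintype_card]
  have hcard : Fintype.card ι * q ≤ Module.finrank κ B * q := by omega
  exact ⟨Nat.le_of_mul_le_mul_right hcard hq.pos, inferInstance⟩

set_option maxHeartbeats 1600000 in
set_option synthInstance.maxHeartbeats 1000000 in
/-- Affine form of Lemma 3.6 (assertions (iv) and (v)): let `k ⊆ κ` be finite fields,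
`B` a finite étale `κ`-algebra (equivalently, a nonzero finite-dimensional reduced
commutative `κ`-algebra) with a `κ`-algebra homomorphism `B → κ`, and `I` a nonzero
ideal of `κ[t]`. Then for all sufficiently large distinct primes `q₁ ≠ q₂` and field
extensions `kⱼ/k` of degree `qⱼ`, there is a surjective `κ`-algebra homomorphism
`κ[t] → (B ⊗[k] k₁) × (B ⊗[k] k₂)` whose kernel is comaximal with `I`. -/
theorem stmt_8 (k κ : Type) [Field k] [Field κ] [Fintype k] [Fintype κ]
    [Algebra k κ] (B : Type) [CommRing B] [Algebra κ B] [Algebra k B]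
    [IsScalarTower k κ B] [Nontrivial B] [FiniteDimensional κ B] [IsReduced B]
    (ψ : B →ₐ[κ] κ) (I : Ideal (Polynomial κ)) (hI : I ≠ ⊥) :
    ∃ N : ℕ, ∀ q₁ q₂ : ℕ, q₁.Prime → q₂.Prime → q₁ ≠ q₂ → N ≤ q₁ → N ≤ q₂ →
      ∀ (k₁ k₂ : Type) [Field k₁] [Field k₂] [Algebra k k₁] [Algebra k k₂],
        Module.finrank k k₁ = q₁ → Module.finrank k k₂ = q₂ →
          ∃ φ : Polynomial κ →ₐ[κ] (TensorProduct k B k₁ × TensorProduct k B k₂),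
            Function.Surjective φ ∧ RingHom.ker φ.toRingHom ⊔ I = ⊤ := by
  classical
  set g := Submodule.IsPrincipal.generator I with hgdef
  have hIg : Ideal.span {g} = I := Submodule.IsPrincipal.span_singleton_generator I
  have hg : g ≠ 0 := by
    intro h
    apply hI
    rw [← hIg, h]
    simp
  set n := Module.finrank κ B with hn
  set d := Module.finrank k κ with hd
  set c := 2 * n + g.natDegree with hc
  obtain ⟨N₀, hN₀pos, hN₀⟩ := stmt8_arith (Fintype.card κ) c Fintype.one_lt_card
  refine ⟨max (max (d + 1) (n + 1)) N₀, ?_⟩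
  intro q₁ q₂ hq₁ hq₂ hqne hNq₁ hNq₂ k₁ k₂ _ _ _ _ h1 h2
  obtain ⟨⟨E₁⟩, hdiv₁, hcard₁, hfin₁⟩ := stmt8_component k κ B q₁ hq₁ (by omega) k₁ h1
  obtain ⟨⟨E₂⟩, hdiv₂, hcard₂, hfin₂⟩ := stmt8_component k κ B q₂ hq₂ (by omega) k₂ h2
  set A₁ := TensorProduct k B k₁ with hA₁
  set A₂ := TensorProduct k B k₂ with hA₂
  set ι₁ := {I : Ideal A₁ | I.IsMaximal} with hι₁
  set ι₂ := {I : Ideal A₂ | I.IsMaximal} with hι₂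
  haveI : Finite ι₁ := hfin₁
  haveI : Finite ι₂ := hfin₂
  haveI : Fintype ι₁ := Fintype.ofFinite _
  haveI : Fintype ι₂ := Fintype.ofFinite _
  set K : ι₁ ⊕ ι₂ → Type := Sum.elim (fun a : ι₁ => A₁ ⧸ a.1) (fun b : ι₂ => A₂ ⧸ b.1) with hK
  letI fK : ∀ i, Field (K i) := fun i =>
    match i with
    | .inl a => haveI : a.1.IsMaximal := a.2; Ideal.Quotient.field a.1
    | .inr b => haveI : b.1.IsMaximal := b.2; Ideal.Quotient.field b.1
  letI aK : ∀ i, Algebra κ (K i) := fun i =>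
    match i with
    | .inl a => (inferInstance : Algebra κ (A₁ ⧸ a.1))
    | .inr b => (inferInstance : Algebra κ (A₂ ⧸ b.1))
  haveI fdK : ∀ i, FiniteDimensional κ (K i) := fun i =>
    match i with
    | .inl a => (hdiv₁ a).2.2
    | .inr b => (hdiv₂ b).2.2
  have hcardι : Fintype.card (ι₁ ⊕ ι₂) ≤ 2 * n := by
    rw [Fintype.card_sum]
    rw [Nat.card_eq_fintype_card] at hcard₁ hcard₂
    omega
  have hbig : ∀ i, Module.finrank κ (K i) *
      (Fintype.card κ ^ (Module.finrank κ (K i) / 2) + Fintype.card (ι₁ ⊕ ι₂)) + g.natDegree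
      < Fintype.card κ ^ Module.finrank κ (K i) := by
    intro i
    have he : N₀ ≤ Module.finrank κ (K i) := by
      cases i with
      | inl a =>
        have h1' : q₁ ≤ Module.finrank κ (K (Sum.inl a)) :=
          Nat.le_of_dvd (hdiv₁ a).2.1 (hdiv₁ a).1
        omega
      | inr b =>
        have h2' : q₂ ≤ Module.finrank κ (K (Sum.inr b)) :=
          Nat.le_of_dvd (hdiv₂ b).2.1 (hdiv₂ b).1
        omega
    have harith := hN₀ _ he
    have hmono : Module.finrank κ (K i) *
        (Fintype.card κ ^ (Module.finrank κ (K i) / 2) + Fintype.card (ι₁ ⊕ ι₂)) + g.natDegree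
        ≤ Module.finrank κ (K i) * (Fintype.card κ ^ (Module.finrank κ (K i) / 2) + c) + c := by
      have h3 : Fintype.card (ι₁ ⊕ ι₂) ≤ c := by omega
      have := Nat.mul_le_mul_left (Module.finrank κ (K i))
        (Nat.add_le_add_left h3 (Fintype.card κ ^ (Module.finrank κ (K i) / 2)))
      omega
    omega
  obtain ⟨φ₀, hsurj₀, hker₀⟩ := stmt8_pi κ (ι₁ ⊕ ι₂) K g hg hbig
  -- equivalence (∀ i, K i) ≃ₐ[κ] A₁ × A₂
  let E3 : ((∀ a : ι₁, A₁ ⧸ a.1) × (∀ b : ι₂, A₂ ⧸ b.1)) ≃ₐ[κ] (∀ i, K i) :=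
    { toFun := fun x i => match i with | .inl a => x.1 a | .inr b => x.2 b
      invFun := fun y => (fun a => y (.inl a), fun b => y (.inr b))
      left_inv := fun x => rfl
      right_inv := fun y => by funext i; cases i <;> rfl
      map_mul' := fun x y => by funext i; cases i <;> rfl
      map_add' := fun x y => by funext i; cases i <;> rfl
      commutes' := fun r => by funext i; cases i <;> rfl }
  let EP : (A₁ × A₂) ≃ₐ[κ] ((∀ a : ι₁, A₁ ⧸ a.1) × (∀ b : ι₂, A₂ ⧸ b.1)) :=
    { toFun := fun x => (E₁ x.1, E₂ x.2)
      invFun := fun x => (E₁.symm x.1, E₂.symm x.2)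
      left_inv := fun x => by simp
      right_inv := fun x => by simp
      map_mul' := fun x y => by
        ext <;> simp [Prod.mul_def]
      map_add' := fun x y => by
        ext <;> simp [Prod.add_def]
      commutes' := fun r => by
        ext x <;> simp [Prod.algebraMap_apply] <;>
          [exact congrFun (E₁.commutes r) x; exact congrFun (E₂.commutes r) x] }
  let Φ : (∀ i, K i) ≃ₐ[κ] A₁ × A₂ := E3.symm.trans EP.symm
  refine ⟨Φ.toAlgHom.comp φ₀, Φ.surjective.comp hsurj₀, ?_⟩
  have hker : RingHom.ker (Φ.toAlgHom.comp φ₀).toRingHom = RingHom.ker φ₀ := by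
    ext x
    simp only [RingHom.mem_ker, AlgHom.toRingHom_eq_coe, RingHom.coe_coe, AlgHom.comp_apply,
      AlgEquiv.toAlgHom_eq_coe, AlgEquiv.coe_algHom]
    constructor
    · intro h
      exact Φ.injective (h.trans (map_zero Φ).symm)
    · intro h
      rw [h, map_zero]
  rw [hker, ← hIg]
  exact hker₀
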